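/- Let f : [0,∞) × ℝ³ → ℝ be nonnegative, C¹ in time, and suppose there are constants A₁' ≥ 0, A₂ > 0 and γ ∈ (0,1] such that for all t ≥ 0 and v ∈ ℝ³, ∂_t f(t,v) ≤ A₁' ⟨v⟩^γ + A₂ S(t) ⟨v⟩^γ − 2A₂ f(t,v) ⟨v⟩^γ, where S(t) := sup_{0≤t'≤t} ‖f(t')‖_∞ is assumed finite for all t. Then sup_{t≥0} ‖f(t)‖_∞ ≤ max(‖f(0)‖_∞, A₁'/A₂). -/

import Mathlib

open MeasureTheory

noncomputable abbrev E3 := EuclideanSpace ℝ (Fin 3)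

/-- The Japanese bracket `⟨w⟩ = (1+|w|²)^{1/2}`. -/
noncomputable def jbr (w : E3) : ℝ := Real.sqrt (1 + ‖w‖ ^ 2)

/-- Uniform-in-time `L^∞` bound from the pointwise differential inequality
`∂_t f ≤ A₁'⟨v⟩^γ + A₂ S(t) ⟨v⟩^γ − 2A₂ f ⟨v⟩^γ`, where
`S(t) = sup_{0 ≤ t' ≤ t} ‖f(t')‖_∞` is assumed finite:
`sup_{t ≥ 0} ‖f(t)‖_∞ ≤ max(‖f(0)‖_∞, A₁'/A₂)`. -/
theorem Linfty_uniform_bound (f f' : ℝ → E3 → ℝ) (A₁' A₂ γ : ℝ)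
    (hA1 : 0 ≤ A₁') (hA2 : 0 < A₂) (hγ0 : 0 < γ) (hγ1 : γ ≤ 1)
    (hpos : ∀ t v, 0 ≤ f t v)
    (hderiv : ∀ t v, HasDerivAt (fun s => f s v) (f' t v) t)
    (hbdd : ∀ t ≥ (0:ℝ), BddAbove (Set.range fun p : Set.Icc (0:ℝ) t × E3 => f p.1 p.2))
    (hineq : ∀ t ≥ (0:ℝ), ∀ v : E3,
      f' t v ≤ A₁' * jbr v ^ γ
        + A₂ * (⨆ p : Set.Icc (0:ℝ) t × E3, f p.1 p.2) * jbr v ^ γ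
        - 2 * A₂ * f t v * jbr v ^ γ) :
    ∀ t ≥ (0:ℝ), ∀ v : E3, f t v ≤ max (⨆ w : E3, f 0 w) (A₁' / A₂) := by
  intro t ht v
  set C0 : ℝ := ⨆ w : E3, f 0 w with hC0def
  set S : ℝ := ⨆ p : Set.Icc (0:ℝ) t × E3, f p.1 p.2 with hSdef
  have hne : Nonempty (Set.Icc (0:ℝ) t × E3) := ⟨⟨⟨0, le_refl 0, ht⟩, 0⟩⟩
  have hfS : ∀ s ∈ Set.Icc (0:ℝ) t, ∀ w : E3, f s w ≤ S := by
    intro s hs w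
    exact le_ciSup (hbdd t ht) (⟨⟨s, hs⟩, w⟩ : Set.Icc (0:ℝ) t × E3)
  have hsupx : ∀ x ∈ Set.Icc (0:ℝ) t,
      (⨆ p : Set.Icc (0:ℝ) x × E3, f p.1 p.2) ≤ S := by
    intro x hx
    have : Nonempty (Set.Icc (0:ℝ) x × E3) := ⟨⟨⟨0, le_refl 0, hx.1⟩, 0⟩⟩
    exact ciSup_le fun p => hfS p.1 ⟨p.1.2.1, p.1.2.2.trans hx.2⟩ p.2
  have hbdd0 : BddAbove (Set.range (f 0)) := by
    obtain ⟨b, hb⟩ := hbdd 0 le_rfl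
    refine ⟨b, ?_⟩
    rintro y ⟨w, rfl⟩
    exact hb ⟨⟨⟨0, le_refl 0, le_refl 0⟩, w⟩, rfl⟩
  have hf0C0 : ∀ w : E3, f 0 w ≤ C0 := fun w => le_ciSup hbdd0 w
  set K : ℝ := A₁' / (2 * A₂) + S / 2 with hKdef
  set M : ℝ := max C0 K with hMdef
  have hKM : K ≤ M := le_max_right _ _
  -- Key fencing estimate, for every w and every ε > 0
  have key : ∀ w : E3, ∀ s ∈ Set.Icc (0:ℝ) t, f s w ≤ M := by
    intro w
    have hjpos : (0:ℝ) < jbr w := Real.sqrt_pos.mpr (by positivity)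
    have hJ : (0:ℝ) < jbr w ^ γ := Real.rpow_pos_of_pos hjpos γ
    have main : ∀ ε > (0:ℝ), ∀ s ∈ Set.Icc (0:ℝ) t, f s w ≤ M + ε * (1 + s) := by
      intro ε hε
      have hB : ∀ x : ℝ, HasDerivAt (fun s : ℝ => M + ε * (1 + s)) ε x := by
        intro x
        have h1 : HasDerivAt (fun s : ℝ => 1 + s) 1 x := (hasDerivAt_id x).const_add 1
        have h2 := (h1.const_mul ε).const_add M
        simpa using h2
      have bound : ∀ x ∈ Set.Ico (0:ℝ) t, f x w = M + ε * (1 + x) →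
          f' x w < ε := by
        intro x hx heq
        have hx' : x ∈ Set.Icc (0:ℝ) t := ⟨hx.1, le_of_lt hx.2⟩
        have h1 := hineq x hx.1 w
        have h2 := hsupx x hx'
        rw [heq] at h1
        have h3 : A₂ * (⨆ p : Set.Icc (0:ℝ) x × E3, f p.1 p.2) * jbr w ^ γ
            ≤ A₂ * S * jbr w ^ γ :=
          mul_le_mul_of_nonneg_right (mul_le_mul_of_nonneg_left h2 hA2.le) hJ.le
        have h4 : f' x w ≤ A₁' * jbr w ^ γ + A₂ * S * jbr w ^ γ
            - 2 * A₂ * (M + ε * (1 + x)) * jbr w ^ γ := by linarith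
        have hx0 : (0:ℝ) ≤ x := hx.1
        have h5 : A₁' * jbr w ^ γ + A₂ * S * jbr w ^ γ
            = 2 * A₂ * K * jbr w ^ γ := by
          rw [hKdef]; field_simp
        nlinarith [mul_nonneg (mul_nonneg hA2.le (sub_nonneg.mpr hKM)) hJ.le,
          mul_pos (mul_pos (mul_pos hA2 hε) hJ) (show (0:ℝ) < 1 + x by linarith)]
      have := image_le_of_deriv_right_lt_deriv_boundary
        (f := fun s => f s w) (f' := fun s => f' s w) (a := 0) (b := t)
        (fun s _ => (hderiv s w).continuousAt.continuousWithinAt)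
        (fun x _ => (hderiv x w).hasDerivWithinAt)
        (B := fun s : ℝ => M + ε * (1 + s)) (B' := fun _ => ε)
        (by
          have : f 0 w ≤ M := (hf0C0 w).trans (le_max_left _ _)
          have : f 0 w ≤ M + ε * (1 + 0) := by nlinarith
          simpa using this)
        hB bound
      intro s hs
      exact this hs
    intro s hs
    refine le_of_forall_pos_le_add ?_
    intro ε hε
    have h1s : (0:ℝ) < 1 + s := by linarith [hs.1]
    have := main (ε / (1 + s)) (by positivity) s hs
    calc f s w ≤ M + ε / (1 + s) * (1 + s) := this
      _ = M + ε := by field_simp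
  have hSM : S ≤ M := ciSup_le fun p => key p.2 p.1 p.1.2
  have hfv : f t v ≤ S := hfS t ⟨ht, le_refl t⟩ v
  rcases le_max_iff.mp hSM with h | h
  · exact hfv.trans (h.trans (le_max_left _ _))
  · have h2A : (0:ℝ) < 2 * A₂ := by linarith
    have hSA : S ≤ A₁' / A₂ := by
      rw [le_div_iff₀ hA2]
      have h6 := mul_le_mul_of_nonneg_right h h2A.le
      have h8 : K * (2 * A₂) = A₁' + S * A₂ := by
        rw [hKdef]; field_simp
      linarith
    exact hfv.trans (hSA.trans (le_max_right _ _))
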